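/- (Proposition 2.) Fix r > 0 and θ > 0. There exists c ∈ (0,1) satisfying (1/θ + rc)² = r c (1−c) — equivalently, a point where the second derivative in c of φ_r(c,θ) = H_b(c) − (1/r) ln(1+rθc), namely −1/(c(1−c)) + r/(1/θ+rc)², vanishes — if and only if θ ≥ 2 + 2√((r+1)/r). In particular, the smallest such θ is θ_cp(r) = 2 + √(4(r+1)/r). -/

import Mathlib

/-- Proposition 2 of the paper: for fixed `r > 0` and `θ > 0`, there exists
`c ∈ (0,1)` satisfying `(1/θ + rc)² = rc(1-c)` — equivalently, a point where the
second derivative in `c` of `φ_r(c,θ)`, namely `-1/(c(1-c)) + r/(1/θ+rc)²`,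
vanishes — if and only if `θ ≥ 2 + 2√((r+1)/r)`. In particular, the smallest such
`θ` is `θ_cp(r) = 2 + √(4(r+1)/r)`. -/
theorem qER_critical_point (r θ : ℝ) (hr : 0 < r) (hθ : 0 < θ) :
    ((∃ c ∈ Set.Ioo (0 : ℝ) 1, (1 / θ + r * c) ^ 2 = r * c * (1 - c)) ↔
      2 + 2 * Real.sqrt ((r + 1) / r) ≤ θ) ∧
    ((∃ c ∈ Set.Ioo (0 : ℝ) 1,
        -(1 / (c * (1 - c))) + r / (1 / θ + r * c) ^ 2 = 0) ↔
      2 + 2 * Real.sqrt ((r + 1) / r) ≤ θ) ∧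
    IsLeast {t : ℝ | 0 < t ∧
        ∃ c ∈ Set.Ioo (0 : ℝ) 1, (1 / t + r * c) ^ 2 = r * c * (1 - c)}
      (2 + Real.sqrt (4 * (r + 1) / r)) := by
  have hr' : r ≠ 0 := hr.ne'
  have hθ' : θ ≠ 0 := hθ.ne'
  have hr1 : (0:ℝ) < r + 1 := by linarith
  have hratio : (1:ℝ) ≤ (r + 1) / r := by
    rw [le_div_iff₀ hr]; linarith
  have hsq : Real.sqrt (4 * (r + 1) / r) = 2 * Real.sqrt ((r + 1) / r) := by
    rw [show 4 * (r + 1) / r = 2 ^ 2 * ((r + 1) / r) by ring,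
      Real.sqrt_mul (by norm_num : (0:ℝ) ≤ 2 ^ 2), Real.sqrt_sq (by norm_num : (0:ℝ) ≤ 2)]
  have h1s : 1 ≤ Real.sqrt ((r + 1) / r) := by
    have := Real.sqrt_le_sqrt hratio
    rwa [Real.sqrt_one] at this
  -- key iff, for any positive t
  have key : ∀ t : ℝ, 0 < t →
      ((∃ c ∈ Set.Ioo (0 : ℝ) 1, (1 / t + r * c) ^ 2 = r * c * (1 - c)) ↔
        2 + 2 * Real.sqrt ((r + 1) / r) ≤ t) := by
    intro t ht
    have ht' : t ≠ 0 := ht.ne'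
    constructor
    · rintro ⟨c, ⟨hc0, hc1⟩, heq⟩
      have heq' : t ^ 2 * r * (r + 1) * c ^ 2 + t * r * (2 - t) * c + 1 = 0 := by
        field_simp at heq
        linear_combination heq
      have disc : (2 * t ^ 2 * r * (r + 1) * c + t * r * (2 - t)) ^ 2
          = t ^ 2 * r * (r * (t - 2) ^ 2 - 4 * (r + 1)) := by
        linear_combination (4 * (t ^ 2 * r * (r + 1))) * heq'
      have hd : 0 ≤ r * (t - 2) ^ 2 - 4 * (r + 1) := by
        nlinarith [sq_nonneg (2 * t ^ 2 * r * (r + 1) * c + t * r * (2 - t)),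
          mul_pos (pow_pos ht 2) hr]
      have ht2 : 2 ≤ t := by
        by_contra h
        push_neg at h
        nlinarith [mul_pos (mul_pos hr ht) (by linarith : (0:ℝ) < 4 - t)]
      have h4 : 4 * ((r + 1) / r) ≤ (t - 2) ^ 2 := by
        rw [show 4 * ((r + 1) / r) = 4 * (r + 1) / r by ring, div_le_iff₀ hr]
        nlinarith
      have h5 : 2 * Real.sqrt ((r + 1) / r) ≤ t - 2 := by
        have := Real.sqrt_le_sqrt h4
        rwa [show 4 * ((r + 1) / r) = 4 * (r + 1) / r by ring, hsq,
          Real.sqrt_sq (by linarith)] at this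
      linarith
    · intro htcp
      set s := Real.sqrt ((t - 2) ^ 2 - 4 * (r + 1) / r) with hs_def
      have ht2 : 4 ≤ t := by nlinarith
      have hnn : 0 ≤ (t - 2) ^ 2 - 4 * (r + 1) / r := by
        have hq := Real.sq_sqrt (le_trans (by norm_num) hratio : (0:ℝ) ≤ (r+1)/r)
        have ha : 2 * Real.sqrt ((r + 1) / r) ≤ t - 2 := by linarith
        have hm := mul_le_mul ha ha (by positivity) (by linarith)
        have hrw : 4 * (r + 1) / r = 4 * ((r + 1) / r) := by ring
        nlinarith [hq, hm, hrw]
      have hs2 : s ^ 2 = (t - 2) ^ 2 - 4 * (r + 1) / r := Real.sq_sqrt hnn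
      have hs0 : 0 ≤ s := Real.sqrt_nonneg _
      have hs2' : r * s ^ 2 = r * (t - 2) ^ 2 - 4 * (r + 1) := by
        rw [hs2]; field_simp
      have hslt : s < t - 2 := by
        nlinarith [div_pos (by linarith : (0:ℝ) < 4 * (r + 1)) hr]
      refine ⟨(t - 2 - s) / (2 * t * (r + 1)), ⟨?_, ?_⟩, ?_⟩
      · exact div_pos (by linarith) (by positivity)
      · rw [div_lt_one (by positivity)]
        nlinarith [mul_pos ht hr]
      · set c := (t - 2 - s) / (2 * t * (r + 1)) with hc_def
        have hc : 2 * t * (r + 1) * c = t - 2 - s := by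
          rw [hc_def]; field_simp
        have h4 : (4 * (r + 1)) * (t ^ 2 * r * (r + 1) * c ^ 2 + t * r * (2 - t) * c + 1) = 0 := by
          linear_combination (r * (2 * t * (r + 1) * c + (t - 2 - s)) + 2 * r * (2 - t)) * hc + hs2'
        have key0 : t ^ 2 * r * (r + 1) * c ^ 2 + t * r * (2 - t) * c + 1 = 0 :=
          (mul_eq_zero.mp h4).resolve_left (by positivity)
        field_simp
        linear_combination key0
  refine ⟨key θ hθ, ?_, ?_, ?_⟩
  · rw [← key θ hθ]
    constructor
    · rintro ⟨c, ⟨hc0, hc1⟩, heq⟩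
      refine ⟨c, ⟨hc0, hc1⟩, ?_⟩
      have h1 : 0 < c * (1 - c) := by nlinarith
      have h2 : 0 < 1 / θ + r * c := by positivity
      field_simp at heq
      field_simp
      linear_combination (-1 : ℝ) * heq
    · rintro ⟨c, ⟨hc0, hc1⟩, heq⟩
      refine ⟨c, ⟨hc0, hc1⟩, ?_⟩
      have h1 : 0 < c * (1 - c) := by nlinarith
      have h2 : 0 < 1 / θ + r * c := by positivity
      rw [heq]
      have h3 : (0:ℝ) < r * c * (1 - c) :=
        mul_pos (mul_pos hr hc0) (by linarith)
      field_simp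
      ring
  · refine ⟨by positivity, ?_⟩
    rw [key _ (by positivity), hsq]
  · rintro x ⟨hx0, hx⟩
    have := (key x hx0).mp hx
    rw [hsq]; linarith
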